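/- Completeness of minimal-separator full MVDs: if X ⟶⟶ Y|Z is an ε-MVD for R (i.e., I(Y;Z|X) ≤ ε), then there exist MVDs φ₁,…,φ_m in the set M_ε of full ε-MVDs whose keys are minimal separators, with m = |Y|·|Z|, such that I(Y;Z|X) ≤ Σᵢ J(φᵢ) is a Shannon inequality. -/

import Mathlib

open Finset
open scoped Classical

variable {α : Type*}

/-- A multivalued dependency over the attribute set `α`: a key and a set of dependents. -/
structure MVD (α : Type*) where
  key : Finset α
  deps : Finset (Finset α)

namespace MVD

variable [Fintype α] [DecidableEq α]

/-- A well-formed MVD: at least two dependents, each dependent nonempty, disjoint from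
the key and pairwise disjoint, and together with the key covering all attributes. -/
def valid (φ : MVD α) : Prop :=
  2 ≤ φ.deps.card ∧
  (∀ D ∈ φ.deps, D.Nonempty ∧ Disjoint D φ.key) ∧
  (∀ D ∈ φ.deps, ∀ E ∈ φ.deps, D ≠ E → Disjoint D E) ∧
  φ.key ∪ φ.deps.sup id = Finset.univ

/-- `J(S ⟶⟶ W₁|⋯|W_p) := Σᵢ H(S∪Wᵢ) − (p−1)H(S) − H(Ω)`. -/
noncomputable def J (H : Finset α → ℝ) (φ : MVD α) : ℝ :=
  (∑ D ∈ φ.deps, H (φ.key ∪ D)) - ((φ.deps.card : ℝ) - 1) * H φ.key - H Finset.univ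

/-- `φ` is an `ε`-MVD: well-formed with `J(φ) ≤ ε`. -/
def isEps (H : Finset α → ℝ) (ε : ℝ) (φ : MVD α) : Prop :=
  φ.valid ∧ φ.J H ≤ ε

/-- `φ` refines `ψ`: same key and every dependent of `φ` is contained in a dependent of `ψ`. -/
def refines (φ ψ : MVD α) : Prop :=
  φ.key = ψ.key ∧ ∀ D ∈ φ.deps, ∃ E ∈ ψ.deps, D ⊆ E

/-- Strict refinement. -/
def strictRefines (φ ψ : MVD α) : Prop :=
  refines φ ψ ∧ φ.deps ≠ ψ.deps

/-- `φ` is a full `ε`-MVD: it `ε`-holds and no strict refinement of it `ε`-holds. -/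
def full (H : Finset α → ℝ) (ε : ℝ) (φ : MVD α) : Prop :=
  isEps H ε φ ∧ ∀ ψ : MVD α, ψ.valid → strictRefines ψ φ → ¬ ψ.J H ≤ ε

/-- `φ` puts the attributes `A` and `B` into two distinct dependents. -/
def separatesPair (φ : MVD α) (A B : α) : Prop :=
  ∃ D ∈ φ.deps, ∃ E ∈ φ.deps, D ≠ E ∧ A ∈ D ∧ B ∈ E

end MVD

variable [Fintype α] [DecidableEq α]

/-- The set `S` separates attributes `A,B`: some `ε`-MVD with key `S` separates them. -/
def sepSet (H : Finset α → ℝ) (ε : ℝ) (S : Finset α) (A B : α) : Prop :=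
  ∃ φ : MVD α, φ.key = S ∧ φ.isEps H ε ∧ φ.separatesPair A B

/-- `S` is a minimal `A,B`-separator. -/
def minSep (H : Finset α → ℝ) (ε : ℝ) (S : Finset α) (A B : α) : Prop :=
  sepSet H ε S A B ∧ ∀ S' ⊂ S, ¬ sepSet H ε S' A B

/-- `M_ε`: the full `ε`-MVDs whose key is a minimal `A,B`-separator, for some pair `A,B`
which the MVD separates. -/
def Meps (H : Finset α → ℝ) (ε : ℝ) : Set (MVD α) :=
  {φ | φ.full H ε ∧ ∃ A B : α, minSep H ε φ.key A B ∧ φ.separatesPair A B}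

section Helpers

variable (H : Finset α → ℝ)


/-- Submodularity at a common base set. -/
lemma submod_at (hsub : ∀ A B : Finset α, H (A ∪ B) + H (A ∩ B) ≤ H A + H B) (S P Q : Finset α) (hPQ : Disjoint P Q) :
    H (S ∪ P ∪ Q) + H S ≤ H (S ∪ P) + H (S ∪ Q) := by
  have h := hsub (S ∪ P) (S ∪ Q)
  have h1 : (S ∪ P) ∪ (S ∪ Q) = S ∪ P ∪ Q := by
    ext x; simp [Finset.mem_union]; tauto
  have h2 : (S ∪ P) ∩ (S ∪ Q) = S := by
    have hd := Finset.disjoint_left.mp hPQ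
    ext x
    simp only [Finset.mem_inter, Finset.mem_union]
    constructor
    · rintro ⟨hx1 | hx1, hx2 | hx2⟩ <;> first | assumption | exact absurd hx2 (hd hx1)
    · intro hx; exact ⟨Or.inl hx, Or.inl hx⟩
  rw [h1, h2] at h
  linarith

/-- Nonnegativity of conditional mutual information. -/
lemma cmi_nonneg (hsub : ∀ A B : Finset α, H (A ∪ B) + H (A ∩ B) ≤ H A + H B) (W P Q : Finset α) (hPQ : Disjoint P Q) :
    0 ≤ H (W ∪ P) + H (W ∪ Q) - H W - H (W ∪ P ∪ Q) := by
  have := submod_at H hsub W P Q hPQ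
  linarith

/-- Enlarging one argument of conditional mutual information. -/
lemma enlarge (hsub : ∀ A B : Finset α, H (A ∪ B) + H (A ∩ B) ≤ H A + H B) (W P P' Q : Finset α) (hPP' : P ⊆ P') (hQ : Disjoint P' Q) :
    H (W ∪ P' ∪ Q) + H (W ∪ P) ≤ H (W ∪ P') + H (W ∪ P ∪ Q) := by
  have h := hsub (W ∪ P') (W ∪ P ∪ Q)
  have hsubP := fun x => @hPP' x
  have hd := Finset.disjoint_left.mp hQ
  have h1 : (W ∪ P') ∪ (W ∪ P ∪ Q) = W ∪ P' ∪ Q := by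
    ext x
    simp only [Finset.mem_union]
    have := @hsubP x
    tauto
  have h2 : (W ∪ P') ∩ (W ∪ P ∪ Q) = W ∪ P := by
    ext x
    simp only [Finset.mem_inter, Finset.mem_union]
    have h3 := @hsubP x
    have h4 := @hd x
    tauto
  rw [h1, h2] at h
  linarith

/-- Key-shrinking inequality (two submodularities). -/
lemma keyShrink (hsub : ∀ A B : Finset α, H (A ∪ B) + H (A ∩ B) ≤ H A + H B) (S W U V : Finset α) (hSW : S ⊆ W) (hWuniv : W ⊆ S ∪ U ∪ V)
    (hUV : Disjoint U V) :
    H (W ∪ U) + H (W ∪ V) + H S ≤ H (S ∪ U) + H (S ∪ V) + H W := by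
  have hSW' := fun x => @hSW x
  have hWu := fun x => @hWuniv x
  have hd : ∀ x, x ∈ U → x ∉ V := fun x hx => Finset.disjoint_left.mp hUV hx
  -- first submodularity: (S ∪ U) and W
  have ha := hsub (S ∪ U) W
  have ha1 : (S ∪ U) ∪ W = W ∪ U := by
    ext x; simp only [Finset.mem_union]
    have := hSW' x; tauto
  have ha2 : (S ∪ U) ∩ W = S ∪ (U ∩ W) := by
    ext x; simp only [Finset.mem_inter, Finset.mem_union]
    have := hSW' x; tauto
  rw [ha1, ha2] at ha
  -- second submodularity: (S ∪ V) and (S ∪ (U ∩ W))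
  have hb := hsub (S ∪ V) (S ∪ (U ∩ W))
  have hb1 : (S ∪ V) ∪ (S ∪ (U ∩ W)) = W ∪ V := by
    ext x; simp only [Finset.mem_union, Finset.mem_inter]
    have h1 := hSW' x; have h2 := hWu x; have h3 := hd x
    simp only [Finset.mem_union] at h2
    tauto
  have hb2 : (S ∪ V) ∩ (S ∪ (U ∩ W)) = S := by
    ext x; simp only [Finset.mem_inter, Finset.mem_union, Finset.mem_inter]
    have h3 := hd x
    constructor
    · rintro ⟨hx1 | hx1, hx2 | hx2⟩ <;> first | assumption | (exact absurd hx1 (fun h => h3 hx2.1 h)) |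
        (exact absurd hx2.1 (fun h => h3 h hx1))
    · intro hx; exact ⟨Or.inl hx, Or.inl hx⟩
  rw [hb1, hb2] at hb
  linarith

/-- Superadditivity over a family of pairwise disjoint sets. -/
lemma supadd (hsub : ∀ A B : Finset α, H (A ∪ B) + H (A ∩ B) ≤ H A + H B) (S : Finset α) (𝒜 : Finset (Finset α))
    (hpw : ∀ D ∈ 𝒜, ∀ E ∈ 𝒜, D ≠ E → Disjoint D E) :
    H (S ∪ 𝒜.sup id) + (𝒜.card : ℝ) * H S ≤ (∑ D ∈ 𝒜, H (S ∪ D)) + H S := by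
  classical
  induction 𝒜 using Finset.induction_on with
  | empty => simp
  | @insert D 𝒜 hD ih =>
    have hpw' : ∀ D' ∈ 𝒜, ∀ E ∈ 𝒜, D' ≠ E → Disjoint D' E := by
      intro D' hD' E hE hne
      exact hpw D' (Finset.mem_insert_of_mem hD') E (Finset.mem_insert_of_mem hE) hne
    have ihh := ih hpw'
    have hdisj : Disjoint D (𝒜.sup id) := by
      rw [Finset.disjoint_sup_right]
      intro E hE
      exact hpw D (Finset.mem_insert_self _ _) E (Finset.mem_insert_of_mem hE)
        (by rintro rfl; exact hD hE)
    have hs := submod_at H hsub S D (𝒜.sup id) hdisj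
    have hsup : (insert D 𝒜).sup id = D ∪ 𝒜.sup id := by
      simp [Finset.sup_insert]
    rw [hsup, Finset.sum_insert hD, Finset.card_insert_of_notMem hD]
    push_cast
    have : S ∪ (D ∪ 𝒜.sup id) = S ∪ D ∪ 𝒜.sup id := by rw [Finset.union_assoc]
    rw [this]
    linarith

end Helpers
section MVDHelpers

set_option linter.unusedSectionVars false

namespace MVD

variable [Fintype α] [DecidableEq α]

lemma refines_refl (φ : MVD α) : φ.refines φ :=
  ⟨rfl, fun D hD => ⟨D, hD, Finset.Subset.refl D⟩⟩

lemma refines_trans {φ ψ χ : MVD α} (h1 : φ.refines ψ) (h2 : ψ.refines χ) : φ.refines χ := by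
  refine ⟨h1.1.trans h2.1, fun D hD => ?_⟩
  obtain ⟨E, hE, hDE⟩ := h1.2 D hD
  obtain ⟨F, hF, hEF⟩ := h2.2 E hE
  exact ⟨F, hF, hDE.trans hEF⟩

/-- In a valid MVD the dependent containing a given attribute is unique. -/
lemma dep_unique {φ : MVD α} (hv : φ.valid) {D E : Finset α} {x : α}
    (hD : D ∈ φ.deps) (hE : E ∈ φ.deps) (hxD : x ∈ D) (hxE : x ∈ E) : D = E := by
  by_contra hne
  exact Finset.disjoint_left.mp (hv.2.2.1 D hD E hE hne) hxD hxE

/-- In a valid MVD every attribute outside the key lies in some dependent. -/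
lemma exists_dep {φ : MVD α} (hv : φ.valid) {x : α} (hx : x ∉ φ.key) :
    ∃ D ∈ φ.deps, x ∈ D := by
  have hx' : x ∈ φ.key ∪ φ.deps.sup id := by rw [hv.2.2.2]; exact Finset.mem_univ x
  rcases Finset.mem_union.mp hx' with h | h
  · exact absurd h hx
  · exact Finset.mem_sup.mp h

/-- Attributes in dependents are outside the key. -/
lemma not_mem_key {φ : MVD α} (hv : φ.valid) {D : Finset α} {x : α}
    (hD : D ∈ φ.deps) (hx : x ∈ D) : x ∉ φ.key :=
  fun hk => Finset.disjoint_left.mp ((hv.2.1 D hD).2) hx hk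

/-- A strict refinement of a valid MVD has strictly more dependents. -/
lemma card_lt_of_strictRefines {φ ψ : MVD α} (hφ : φ.valid) (hψ : ψ.valid)
    (h : φ.strictRefines ψ) : ψ.deps.card < φ.deps.card := by
  classical
  have hkey : φ.key = ψ.key := h.1.1
  -- choice function: each dependent of φ lies inside some dependent of ψ
  have hch : ∀ D ∈ φ.deps, ∃ E ∈ ψ.deps, D ⊆ E := h.1.2
  choose f hf1 hf2 using fun D (hD : D ∈ φ.deps) => hch D hD
  set g : Finset α → Finset α := fun D => if hD : D ∈ φ.deps then f D hD else ∅ with hg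
  have hg1 : ∀ D ∈ φ.deps, g D ∈ ψ.deps := by
    intro D hD; simp only [hg, dif_pos hD]; exact hf1 D hD
  have hg2 : ∀ D (hD : D ∈ φ.deps), D ⊆ g D := by
    intro D hD; simp only [hg, dif_pos hD]; exact hf2 D hD
  -- surjectivity of g from φ.deps onto ψ.deps
  have hsurj : Set.SurjOn g (φ.deps : Set (Finset α)) (ψ.deps : Set (Finset α)) := by
    intro E hE
    simp only [Finset.coe_mem, Finset.mem_coe] at hE ⊢
    obtain ⟨x, hx⟩ := (hψ.2.1 E hE).1
    have hxk : x ∉ φ.key := by rw [hkey]; exact not_mem_key hψ hE hx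
    obtain ⟨D, hD, hxD⟩ := exists_dep hφ hxk
    have hxgD : x ∈ g D := hg2 D hD hxD
    have : g D = E := dep_unique hψ (hg1 D hD) hE hxgD hx
    exact ⟨D, hD, this⟩
  have hle : ψ.deps.card ≤ φ.deps.card := Finset.card_le_card_of_surjOn g hsurj
  rcases lt_or_eq_of_le hle with hlt | heq
  · exact hlt
  -- equal cardinality: derive that the deps coincide, contradiction
  exfalso
  have hinj : ∀ ⦃D₁⦄, D₁ ∈ φ.deps → ∀ ⦃D₂⦄, D₂ ∈ φ.deps → g D₁ = g D₂ → D₁ = D₂ := by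
    intro D₁ h₁ D₂ h₂ hgeq
    refine Finset.inj_on_of_surj_on_of_card_le (t := ψ.deps) (fun D _ => g D)
      (fun D hD => hg1 D hD) (fun E hE => ?_) (le_of_eq heq.symm) h₁ h₂ hgeq
    obtain ⟨D, hD, hDE⟩ := hsurj hE
    exact ⟨D, hD, hDE⟩
  have hfix : ∀ D ∈ φ.deps, D = g D := by
    intro D hD
    apply Finset.Subset.antisymm (hg2 D hD)
    intro x hx
    have hxk : x ∉ φ.key := by
      rw [hkey]; exact not_mem_key hψ (hg1 D hD) hx
    obtain ⟨D₂, hD₂, hxD₂⟩ := exists_dep hφ hxk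
    have hxgD₂ : x ∈ g D₂ := hg2 D₂ hD₂ hxD₂
    have : g D₂ = g D := dep_unique hψ (hg1 D₂ hD₂) (hg1 D hD) hxgD₂ hx
    have hDD : D₂ = D := hinj hD₂ hD this
    rwa [hDD] at hxD₂
  apply h.2
  apply Finset.eq_of_subset_of_card_le
  · intro D hD
    have := hfix D hD
    rw [this]; exact hg1 D hD
  · exact hle

/-- Every valid `ε`-MVD can be refined to a full `ε`-MVD. -/
lemma exists_full (H : Finset α → ℝ) (ε : ℝ) :
    ∀ n (χ : MVD α), Fintype.card (Finset α) ≤ χ.deps.card + n → χ.valid → χ.J H ≤ ε →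
    ∃ φ : MVD α, φ.full H ε ∧ φ.refines χ := by
  intro n
  induction n with
  | zero =>
    intro χ hn hv hJ
    refine ⟨χ, ⟨⟨hv, hJ⟩, ?_⟩, refines_refl χ⟩
    intro ψ hψv hψr _
    have h1 := card_lt_of_strictRefines hψv hv hψr
    have h2 : ψ.deps.card ≤ Fintype.card (Finset α) := Finset.card_le_univ _
    omega
  | succ n ih =>
    intro χ hn hv hJ
    by_cases hfull : χ.full H ε
    · exact ⟨χ, hfull, refines_refl χ⟩
    · simp only [full, not_and, not_forall] at hfull
      obtain ⟨ψ, hψv, hψr, hψJ⟩ := hfull ⟨hv, hJ⟩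
      have hψJ' : ψ.J H ≤ ε := by tauto
      have hlt := card_lt_of_strictRefines hψv hv hψr
      obtain ⟨φ, hφfull, hφr⟩ := ih ψ (by omega) hψv hψJ'
      exact ⟨φ, hφfull, refines_trans hφr hψr.1⟩

end MVD

end MVDHelpers
section CoreHelpers

set_option linter.unusedSectionVars false

variable (H : Finset α → ℝ)

/-- Merging all dependents other than `D` does not increase `J`. -/
lemma coarsen (hsub : ∀ A B : Finset α, H (A ∪ B) + H (A ∩ B) ≤ H A + H B)
    (φ : MVD α) (hv : φ.valid) (D : Finset α) (hD : D ∈ φ.deps) :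
    H (φ.key ∪ D) + H (φ.key ∪ (Finset.univ \ (φ.key ∪ D))) - H φ.key - H Finset.univ
      ≤ φ.J H := by
  classical
  have hpw : ∀ D' ∈ φ.deps.erase D, ∀ E ∈ φ.deps.erase D, D' ≠ E → Disjoint D' E := by
    intro D' hD' E hE hne
    exact hv.2.2.1 D' (Finset.mem_of_mem_erase hD') E (Finset.mem_of_mem_erase hE) hne
  have hsup : (φ.deps.erase D).sup id = Finset.univ \ (φ.key ∪ D) := by
    ext x
    simp only [Finset.mem_sup, Finset.mem_erase, Finset.mem_sdiff, Finset.mem_union,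
      Finset.mem_univ, true_and, id]
    constructor
    · rintro ⟨E, ⟨hne, hE⟩, hxE⟩
      push_neg
      refine ⟨fun hk => MVD.not_mem_key hv hE hxE hk, fun hxD => ?_⟩
      exact Finset.disjoint_left.mp (hv.2.2.1 E hE D hD hne) hxE hxD
    · intro hk
      push_neg at hk
      obtain ⟨hkey, hxD⟩ := hk
      obtain ⟨E, hE, hxE⟩ := MVD.exists_dep hv hkey
      exact ⟨E, ⟨fun h => hxD (h ▸ hxE), hE⟩, hxE⟩
  have hsa := supadd H hsub φ.key (φ.deps.erase D) hpw
  rw [hsup] at hsa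
  have hsum : (∑ E ∈ φ.deps.erase D, H (φ.key ∪ E)) + H (φ.key ∪ D)
      = ∑ E ∈ φ.deps, H (φ.key ∪ E) := Finset.sum_erase_add _ _ hD
  have hcard : ((φ.deps.erase D).card : ℝ) = (φ.deps.card : ℝ) - 1 := by
    rw [Finset.card_erase_of_mem hD]
    have h1 : 1 ≤ φ.deps.card := le_trans (by norm_num) hv.1
    push_cast [Nat.cast_sub h1]
    ring
  rw [hcard] at hsa
  unfold MVD.J
  linarith

/-- `J` of a two-dependent MVD. -/
lemma J_pair (W P Q : Finset α) (hne : P ≠ Q) :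
    (MVD.mk W {P, Q}).J H = H (W ∪ P) + H (W ∪ Q) - H W - H Finset.univ := by
  unfold MVD.J
  simp only [Finset.sum_pair hne, Finset.card_pair hne]
  push_cast
  ring

/-- Validity of a two-dependent MVD. -/
lemma valid_pair (W P Q : Finset α) (hP : P.Nonempty) (hQ : Q.Nonempty)
    (hWP : Disjoint P W) (hWQ : Disjoint Q W) (hPQ : Disjoint P Q)
    (hcov : W ∪ P ∪ Q = Finset.univ) : (MVD.mk W {P, Q}).valid := by
  have hne : P ≠ Q := by
    rintro rfl
    obtain ⟨x, hx⟩ := hP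
    exact Finset.disjoint_left.mp hPQ hx hx
  refine ⟨le_of_eq (Finset.card_pair hne).symm, ?_, ?_, ?_⟩
  · intro E hE
    rcases Finset.mem_insert.mp hE with rfl | hE'
    · exact ⟨hP, hWP⟩
    · rw [Finset.mem_singleton] at hE'
      subst hE'
      exact ⟨hQ, hWQ⟩
  · intro E hE F hF hnef
    rcases Finset.mem_insert.mp hE with rfl | hE' <;>
      rcases Finset.mem_insert.mp hF with rfl | hF'
    · exact absurd rfl hnef
    · rw [Finset.mem_singleton] at hF'; subst hF'; exact hPQ
    · rw [Finset.mem_singleton] at hE'; subst hE'; exact hPQ.symm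
    · rw [Finset.mem_singleton] at hE' hF'; subst hE'; subst hF'; exact absurd rfl hnef
  · simp only [Finset.sup_insert, Finset.sup_singleton, id]
    rw [Finset.sup_eq_union, ← Finset.union_assoc]
    exact hcov

end CoreHelpers
section CoreLemma

set_option linter.unusedSectionVars false

variable (H : Finset α → ℝ)

/-- Core lemma: if `W` separates `A` and `B`, then `I(A;B|W)` is bounded by `J(φ)`
for some full minimal-separator MVD `φ ∈ M_ε`. -/
lemma core (hsub : ∀ A B : Finset α, H (A ∪ B) + H (A ∩ B) ≤ H A + H B)
    (ε : ℝ) (W : Finset α) (A B : α) (hW : sepSet H ε W A B) :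
    ∃ φ : MVD α, φ ∈ Meps H ε ∧
      H (W ∪ {A}) + H (W ∪ {B}) - H W - H (W ∪ {A} ∪ {B}) ≤ φ.J H := by
  classical
  -- find a minimal separator S ⊆ W
  set T := W.powerset.filter (fun S => sepSet H ε S A B) with hT
  have hWT : W ∈ T := by
    simp only [hT, Finset.mem_filter, Finset.mem_powerset]
    exact ⟨Finset.Subset.refl W, hW⟩
  obtain ⟨S, hST, hSmin⟩ := Finset.exists_min_image T Finset.card ⟨W, hWT⟩
  simp only [hT, Finset.mem_filter, Finset.mem_powerset] at hST
  obtain ⟨hSW, hSsep⟩ := hST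
  have hmin : minSep H ε S A B := by
    refine ⟨hSsep, fun S' hS' hsep' => ?_⟩
    have hS'T : S' ∈ T := by
      simp only [hT, Finset.mem_filter, Finset.mem_powerset]
      exact ⟨hS'.subset.trans hSW, hsep'⟩
    have h1 := hSmin S' hS'T
    have h2 := Finset.card_lt_card hS'
    omega
  obtain ⟨ψ', hψ'key, hψ'eps, hψ'sep⟩ := hSsep
  -- refine ψ' to a full ε-MVD φ
  obtain ⟨φ, hφfull, hφref⟩ := MVD.exists_full H ε (Fintype.card (Finset α)) ψ'
      (by have := Finset.card_le_univ ψ'.deps; omega) hψ'eps.1 hψ'eps.2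
  have hφv : φ.valid := hφfull.1.1
  have hφkey : φ.key = S := hφref.1.trans hψ'key
  -- φ separates A and B
  obtain ⟨P, hP, Q, hQ, hPQ, hAP, hBQ⟩ := hψ'sep
  have hAS : A ∉ S := by rw [← hψ'key]; exact MVD.not_mem_key hψ'eps.1 hP hAP
  have hBS : B ∉ S := by rw [← hψ'key]; exact MVD.not_mem_key hψ'eps.1 hQ hBQ
  obtain ⟨D, hD, hAD⟩ := MVD.exists_dep hφv (by rw [hφkey]; exact hAS)
  obtain ⟨E, hE, hBE⟩ := MVD.exists_dep hφv (by rw [hφkey]; exact hBS)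
  have hDE : D ≠ E := by
    rintro rfl
    obtain ⟨P₁, hP₁, hDP₁⟩ := hφref.2 D hD
    have h1 : P₁ = P := MVD.dep_unique hψ'eps.1 hP₁ hP (hDP₁ hAD) hAP
    have h2 : P₁ = Q := MVD.dep_unique hψ'eps.1 hP₁ hQ (hDP₁ hBE) hBQ
    exact hPQ (h1.symm.trans h2)
  have hφsep : φ.separatesPair A B := ⟨D, hD, E, hE, hDE, hAD, hBE⟩
  have hφM : φ ∈ Meps H ε := ⟨hφfull, A, B, by rw [hφkey]; exact hmin, hφsep⟩
  refine ⟨φ, hφM, ?_⟩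
  -- the chain of inequalities
  set V := Finset.univ \ (S ∪ D) with hV
  have hBD : B ∉ D := Finset.disjoint_right.mp (hφv.2.2.1 D hD E hE hDE) hBE
  have hBV : B ∈ V := by
    rw [hV, Finset.mem_sdiff]
    refine ⟨Finset.mem_univ B, ?_⟩
    rw [Finset.mem_union]
    push_neg
    exact ⟨hBS, hBD⟩
  have hSDV : S ∪ D ∪ V = Finset.univ := by
    ext x
    simp only [hV, Finset.mem_union, Finset.mem_sdiff, Finset.mem_univ, true_and, iff_true]
    tauto
  -- (a) coarsening
  have ha := coarsen H hsub φ hφv D hD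
  rw [hφkey, ← hV] at ha
  -- (b) key shrinking
  have hDV : Disjoint D V := by
    rw [Finset.disjoint_right]
    intro x hxV
    rw [hV, Finset.mem_sdiff, Finset.mem_union] at hxV
    tauto
  have hb := keyShrink H hsub S W D V hSW (by rw [hSDV]; exact Finset.subset_univ W) hDV
  -- (c) enlarging the arguments
  have hc1 := enlarge H hsub W {A} D {B} (Finset.singleton_subset_iff.mpr hAD)
    (Finset.disjoint_singleton_right.mpr hBD)
  have hc2 := enlarge H hsub W {B} V D (Finset.singleton_subset_iff.mpr hBV) hDV.symm
  have heq1 : W ∪ {B} ∪ D = W ∪ D ∪ {B} := Finset.union_right_comm W {B} D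
  have heq2 : W ∪ V ∪ D = Finset.univ := by
    apply Finset.eq_univ_of_forall
    intro x
    have hx : x ∈ S ∪ D ∪ V := by rw [hSDV]; exact Finset.mem_univ x
    rw [Finset.mem_union] at hx ⊢
    rw [Finset.mem_union] at hx ⊢
    rcases hx with (hx | hx) | hx
    · exact Or.inl (Or.inl (hSW hx))
    · exact Or.inr hx
    · exact Or.inl (Or.inr hx)
  rw [heq1, heq2] at hc2
  linarith

end CoreLemma
section ChainRule

set_option linter.unusedSectionVars false
set_option maxHeartbeats 1000000

variable (H : Finset α → ℝ)

/-- Chain-rule induction over `Y` for a single attribute `B`. -/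
lemma Bcol (hsub : ∀ A B : Finset α, H (A ∪ B) + H (A ∩ B) ≤ H A + H B) (ε : ℝ) :
    ∀ (n : ℕ) (X Y Z' : Finset α) (B : α), Y.card = n →
    Disjoint X Y → Disjoint X Z' → Disjoint Y Z' →
    B ∉ X → B ∉ Y → B ∉ Z' →
    X ∪ Y ∪ ({B} ∪ Z') = Finset.univ →
    H (X ∪ Y) + H (X ∪ ({B} ∪ Z')) - H X - H Finset.univ ≤ ε →
    ∃ φ : Fin Y.card → MVD α, (∀ i, φ i ∈ Meps H ε) ∧
      H (X ∪ Y) + H (X ∪ {B}) - H X - H (X ∪ Y ∪ {B}) ≤ ∑ i, (φ i).J H := by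
  intro n
  induction n with
  | zero =>
    intro X Y Z' B hcard _ _ _ _ _ _ _ _
    have hY0 : Y = ∅ := Finset.card_eq_zero.mp hcard
    subst hY0
    refine ⟨fun i => ⟨∅, ∅⟩, fun i => absurd i.isLt (by simp), ?_⟩
    rw [Finset.sum_eq_zero (fun i _ => absurd i.isLt (by simp))]
    simp
  | succ n ih =>
    intro X Y Z' B hcard hXY hXZ' hYZ' hBX hBY hBZ' hcov heps
    have hpos : 0 < Y.card := by omega
    obtain ⟨A, hA⟩ := Finset.card_pos.mp hpos
    set Y' := Y.erase A with hY'def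
    have hY'card : Y'.card = n := by
      rw [hY'def, Finset.card_erase_of_mem hA, hcard]
      omega
    have hAY' : A ∉ Y' := Finset.notMem_erase A Y
    have e1 : X ∪ {A} ∪ Y' = X ∪ Y := by
      rw [Finset.union_assoc, ← Finset.insert_eq, Finset.insert_erase hA]
    have hAB : A ≠ B := fun h => hBY (h ▸ hA)
    have hAZ' : A ∉ Z' := Finset.disjoint_left.mp hYZ' hA
    have hABZ' : A ∉ {B} ∪ Z' := by
      rw [Finset.mem_union, Finset.mem_singleton]
      push_neg
      exact ⟨hAB, hAZ'⟩
    -- term 1: I(A;B|X) via the core lemma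
    have hBinBZ : B ∈ {B} ∪ Z' := by simp
    have hYne : Y ≠ {B} ∪ Z' := fun h => hBY (h ▸ hBinBZ)
    have hψvalid : (MVD.mk X {Y, {B} ∪ Z'}).valid := by
      apply valid_pair
      · exact ⟨A, hA⟩
      · exact ⟨B, hBinBZ⟩
      · exact hXY.symm
      · rw [Finset.disjoint_union_left]
        exact ⟨Finset.disjoint_singleton_left.mpr hBX, hXZ'.symm⟩
      · rw [Finset.disjoint_union_right]
        exact ⟨Finset.disjoint_singleton_right.mpr hBY, hYZ'⟩
      · exact hcov
    have hψJ : (MVD.mk X {Y, {B} ∪ Z'}).J H ≤ ε := by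
      rw [J_pair H X Y ({B} ∪ Z') hYne]
      exact heps
    have hs : (MVD.mk X {Y, {B} ∪ Z'}).separatesPair A B := by
      refine ⟨Y, Finset.mem_insert_self _ _, {B} ∪ Z', ?_, hYne, hA, hBinBZ⟩
      exact Finset.mem_insert_of_mem (Finset.mem_singleton_self _)
    have hk : (MVD.mk X {Y, {B} ∪ Z'}).key = X := rfl
    have he : (MVD.mk X {Y, {B} ∪ Z'}).isEps H ε := ⟨hψvalid, hψJ⟩
    have hsep : sepSet H ε X A B := ⟨MVD.mk X {Y, {B} ∪ Z'}, hk, he, hs⟩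
    obtain ⟨φ₀, hφ₀M, bound0⟩ := core H hsub ε X A B hsep
    -- remaining terms: recursion with key X ∪ {A}
    have hnn := cmi_nonneg H hsub X {A} ({B} ∪ Z')
      (Finset.disjoint_singleton_left.mpr hABZ')
    obtain ⟨φr, hφrM, boundr⟩ := ih (X ∪ {A}) Y' Z' B hY'card
      (by rw [Finset.disjoint_union_left]
          exact ⟨hXY.mono_right (Finset.erase_subset _ _),
            Finset.disjoint_singleton_left.mpr hAY'⟩)
      (by rw [Finset.disjoint_union_left]
          exact ⟨hXZ', Finset.disjoint_singleton_left.mpr hAZ'⟩)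
      (hYZ'.mono_left (Finset.erase_subset _ _))
      (by rw [Finset.mem_union, Finset.mem_singleton]
          push_neg
          exact ⟨hBX, fun h => hAB h.symm⟩)
      (fun h => hBY (Finset.mem_of_mem_erase h))
      hBZ'
      (by rw [e1]; exact hcov)
      (by rw [e1]; linarith)
    rw [e1] at boundr
    -- assemble the Y.card = Y'.card + 1 many MVDs
    have hcast : Y.card = Y'.card + 1 := by omega
    refine ⟨fun i => (@Fin.cons _ (fun _ => MVD α) φ₀ φr) (Fin.cast hcast i), fun i => ?_, ?_⟩
    · show (@Fin.cons _ (fun _ => MVD α) φ₀ φr) (Fin.cast hcast i) ∈ Meps H ε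
      refine Fin.cases (motive := fun j => (@Fin.cons _ (fun _ => MVD α) φ₀ φr) j ∈ Meps H ε) ?_ ?_ (Fin.cast hcast i)
      · simp only [Fin.cons_zero]; exact hφ₀M
      · intro k; simp only [Fin.cons_succ]; exact hφrM k
    · have hsum : ∑ i : Fin Y.card, ((@Fin.cons _ (fun _ => MVD α) φ₀ φr) (Fin.cast hcast i) : MVD α).J H
          = ∑ j : Fin (Y'.card + 1), ((@Fin.cons _ (fun _ => MVD α) φ₀ φr) j : MVD α).J H :=
        Fintype.sum_equiv (finCongr hcast) _ _ (fun i => rfl)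
      rw [hsum, Fin.sum_univ_succ]
      simp only [Fin.cons_zero, Fin.cons_succ]
      linarith

/-- Chain-rule induction over `Z`. -/
lemma outerLem (hsub : ∀ A B : Finset α, H (A ∪ B) + H (A ∩ B) ≤ H A + H B) (ε : ℝ) :
    ∀ (n : ℕ) (X Y Z : Finset α), Z.card = n →
    Disjoint X Y → Disjoint X Z → Disjoint Y Z →
    X ∪ Y ∪ Z = Finset.univ →
    H (X ∪ Y) + H (X ∪ Z) - H X - H Finset.univ ≤ ε →
    ∃ φ : Fin (Y.card * Z.card) → MVD α, (∀ i, φ i ∈ Meps H ε) ∧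
      H (X ∪ Y) + H (X ∪ Z) - H X - H (X ∪ Y ∪ Z) ≤ ∑ i, (φ i).J H := by
  intro n
  induction n with
  | zero =>
    intro X Y Z hcard _ _ _ _ _
    have hZ0 : Z = ∅ := Finset.card_eq_zero.mp hcard
    subst hZ0
    refine ⟨fun i => ⟨∅, ∅⟩, fun i => absurd i.isLt (by simp), ?_⟩
    rw [Finset.sum_eq_zero (fun i _ => absurd i.isLt (by simp))]
    simp
  | succ n ih =>
    intro X Y Z hcard hXY hXZ hYZ hcov heps
    have hpos : 0 < Z.card := by omega
    obtain ⟨B, hB⟩ := Finset.card_pos.mp hpos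
    set Z' := Z.erase B with hZ'def
    have hZ'card : Z'.card = n := by
      rw [hZ'def, Finset.card_erase_of_mem hB, hcard]
      omega
    have hceq : {B} ∪ Z' = Z := by
      rw [← Finset.insert_eq, Finset.insert_erase hB]
    have hBX : B ∉ X := Finset.disjoint_right.mp hXZ hB
    have hBY : B ∉ Y := Finset.disjoint_right.mp hYZ hB
    have hBZ' : B ∉ Z' := Finset.notMem_erase B Z
    -- column of Y.card MVDs for the attribute B
    obtain ⟨φ₁, hφ₁M, bound1⟩ := Bcol H hsub ε Y.card X Y Z' B rfl
      hXY (hXZ.mono_right (Finset.erase_subset _ _)) (hYZ.mono_right (Finset.erase_subset _ _))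
      hBX hBY hBZ'
      (by rw [hceq]; exact hcov)
      (by rw [hceq]; exact heps)
    -- recursion with key X ∪ {B}
    have e3 : X ∪ {B} ∪ Y = X ∪ Y ∪ {B} := Finset.union_right_comm X {B} Y
    have e4 : X ∪ {B} ∪ Z' = X ∪ Z := by
      rw [Finset.union_assoc, hceq]
    have e5 : X ∪ {B} ∪ Y ∪ Z' = X ∪ Y ∪ Z := by
      rw [← hceq]
      ext x
      simp only [Finset.mem_union]
      tauto
    have hnn := cmi_nonneg H hsub X Y {B} (Finset.disjoint_singleton_right.mpr hBY)
    obtain ⟨φ₂, hφ₂M, bound2⟩ := ih (X ∪ {B}) Y Z' hZ'card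
      (by rw [Finset.disjoint_union_left]
          exact ⟨hXY, Finset.disjoint_singleton_left.mpr hBY⟩)
      (by rw [Finset.disjoint_union_left]
          exact ⟨hXZ.mono_right (Finset.erase_subset _ _),
            Finset.disjoint_singleton_left.mpr hBZ'⟩)
      (hYZ.mono_right (Finset.erase_subset _ _))
      (by rw [e5]; exact hcov)
      (by rw [e3, e4]; linarith)
    rw [e5, e3, e4] at bound2
    -- assemble the Y.card * Z.card = Y.card + Y.card * Z'.card many MVDs
    have hZcc : Z.card = Z'.card + 1 := by omega
    have hcast : Y.card * Z.card = Y.card + Y.card * Z'.card := by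
      rw [hZcc, Nat.mul_succ]
      ring
    refine ⟨fun i => Fin.append φ₁ φ₂ (Fin.cast hcast i), fun i => ?_, ?_⟩
    · show Fin.append φ₁ φ₂ (Fin.cast hcast i) ∈ Meps H ε
      refine Fin.addCases (motive := fun j => Fin.append φ₁ φ₂ j ∈ Meps H ε) ?_ ?_
        (Fin.cast hcast i)
      · intro k; simp only [Fin.append_left]; exact hφ₁M k
      · intro k; simp only [Fin.append_right]; exact hφ₂M k
    · have hsum : ∑ i : Fin (Y.card * Z.card),
            (Fin.append φ₁ φ₂ (Fin.cast hcast i) : MVD α).J H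
          = ∑ j : Fin (Y.card + Y.card * Z'.card), (Fin.append φ₁ φ₂ j : MVD α).J H :=
        Fintype.sum_equiv (finCongr hcast) _ _ (fun i => rfl)
      rw [hsum, Fin.sum_univ_add]
      simp only [Fin.append_left, Fin.append_right]
      linarith

end ChainRule
/-- Completeness of minimal-separator full MVDs: if `X ⟶⟶ Y|Z`
is an `ε`-MVD for `R` (i.e. `I(Y;Z|X) ≤ ε`, where `H` is the empirical entropy of `R`,
a polymatroid), then there exist `m = |Y|·|Z|` MVDs `φ₁,…,φ_m ∈ M_ε` such that
`I(Y;Z|X) ≤ Σᵢ J(φᵢ)`. -/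
theorem fullMVDs_completeness
    (H : Finset α → ℝ)
    (h0 : H ∅ = 0)
    (hmono : ∀ A B : Finset α, A ⊆ B → H A ≤ H B)
    (hsub : ∀ A B : Finset α, H (A ∪ B) + H (A ∩ B) ≤ H A + H B)
    (ε : ℝ) (hε : 0 ≤ ε)
    (X Y Z : Finset α)
    (hY : Y.Nonempty) (hZ : Z.Nonempty)
    (hYZ : Disjoint Y Z) (hXY : Disjoint X Y) (hXZ : Disjoint X Z)
    (hcover : X ∪ Y ∪ Z = Finset.univ)
    (hMVD : H (X ∪ Y) + H (X ∪ Z) - H (X ∪ Y ∪ Z) - H X ≤ ε) :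
    ∃ φ : Fin (Y.card * Z.card) → MVD α,
      (∀ i, φ i ∈ Meps H ε) ∧
        H (X ∪ Y) + H (X ∪ Z) - H (X ∪ Y ∪ Z) - H X ≤ ∑ i, (φ i).J H := by
  have huniv : H (X ∪ Y ∪ Z) = H Finset.univ := by rw [hcover]
  obtain ⟨φ, hM, hbound⟩ := outerLem H hsub ε Z.card X Y Z rfl hXY hXZ hYZ hcover
    (by linarith)
  exact ⟨φ, hM, by linarith⟩
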